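/- Let u have continuous partial derivatives up to order 1 on T and let v = (v₀, v_b, 𝐯_g) be a triple with v₀ ∈ Q_k(T), v_b ∈ L²(∂T) and 𝐯_g ∈ L²(∂T)². Then (∇_w(Q_N u), ∇_w v)_T = (∇u, ∇v₀)_T − ⟨v₀ − v_b, (𝐐_N∇u)·𝐧⟩_{∂T}. -/

import Mathlib

open MeasureTheory Real

noncomputable section

/-- `Q_k`: real polynomials in two variables of degree at most `k` in each variable. -/
def IsQk (k : ℕ) (v : ℝ → ℝ → ℝ) : Prop :=
  ∃ p : MvPolynomial (Fin 2) ℝ, (∀ i, p.degreeOf i ≤ k) ∧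
    ∀ x y : ℝ, v x y = MvPolynomial.eval ![x, y] p

/-- `P_k`: real polynomials in one variable of degree at most `k`. -/
def IsPk (k : ℕ) (f : ℝ → ℝ) : Prop :=
  ∃ p : Polynomial ℝ, p.natDegree ≤ k ∧ ∀ x : ℝ, f x = p.eval x

/-- Partial derivative in the first variable. -/
def pd1 (w : ℝ → ℝ → ℝ) : ℝ → ℝ → ℝ := fun x y => deriv (fun t => w t y) x

/-- Partial derivative in the second variable. -/
def pd2 (w : ℝ → ℝ → ℝ) : ℝ → ℝ → ℝ := fun x y => deriv (fun t => w x t) y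

/-- Laplacian. -/
def lapl (w : ℝ → ℝ → ℝ) : ℝ → ℝ → ℝ :=
  fun x y => pd1 (pd1 w) x y + pd2 (pd2 w) x y

/-- L² inner product over the rectangle `[x0,x1] × [y0,y1]`. -/
def ipT (x0 x1 y0 y1 : ℝ) (f g : ℝ → ℝ → ℝ) : ℝ :=
  ∫ x in x0..x1, ∫ y in y0..y1, f x y * g x y

/-- Squared L² norm over the rectangle `[x0,x1] × [y0,y1]`. -/
def normSqT (x0 x1 y0 y1 : ℝ) (w : ℝ → ℝ → ℝ) : ℝ := ipT x0 x1 y0 y1 w w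

/-- Squared L² norm over the two edges parallel to the x-axis (`∂T₁`). -/
def normSqE1 (x0 x1 y0 y1 : ℝ) (w : ℝ → ℝ → ℝ) : ℝ :=
  ∫ x in x0..x1, ((w x y0) ^ 2 + (w x y1) ^ 2)

/-- Squared L² norm over the two edges parallel to the y-axis (`∂T₂`). -/
def normSqE2 (x0 x1 y0 y1 : ℝ) (w : ℝ → ℝ → ℝ) : ℝ :=
  ∫ y in y0..y1, ((w x0 y) ^ 2 + (w x1 y) ^ 2)

/-- `P` is the L²(T)-orthogonal projection of `φ` onto `Q_k(T)`. -/
def IsProjT (k : ℕ) (x0 x1 y0 y1 : ℝ) (φ P : ℝ → ℝ → ℝ) : Prop :=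
  IsQk k P ∧ ∀ q : ℝ → ℝ → ℝ, IsQk k q →
    ipT x0 x1 y0 y1 (fun x y => φ x y - P x y) q = 0

/-- `g` is the L²(e)-orthogonal projection of `f` onto `P_k(e)`, for an edge
parametrized by `[a,b]`. -/
def IsProjE (k : ℕ) (a b : ℝ) (f g : ℝ → ℝ) : Prop :=
  IsPk k g ∧ ∀ q : ℝ → ℝ, IsPk k q → (∫ x in a..b, (f x - g x) * q x) = 0

/-- `f` belongs to `L²` of the edge parametrized by `[a,b]`. -/
def L2Edge (a b : ℝ) (f : ℝ → ℝ) : Prop :=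
  IntervalIntegrable f MeasureTheory.volume a b ∧
    IntervalIntegrable (fun x => (f x) ^ 2) MeasureTheory.volume a b

open Finset

section Statement19Aux

def QRep (k : ℕ) (v : ℝ → ℝ → ℝ) : Prop :=
  ∃ c : ℕ → ℕ → ℝ, ∀ x y : ℝ, v x y =
    ∑ i ∈ Finset.range (k+1), ∑ j ∈ Finset.range (k+1), c i j * x ^ i * y ^ j

lemma hasDerivAt_slice1 {w : ℝ → ℝ → ℝ} (hw : ContDiff ℝ 1 (fun p : ℝ × ℝ => w p.1 p.2))
    (x y : ℝ) : HasDerivAt (fun t => w t y) (pd1 w x y) x := by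
  have h : HasDerivAt (fun t : ℝ => (t, y)) ((1:ℝ), (0:ℝ)) x := by
    simpa using (hasDerivAt_id x).prodMk (hasDerivAt_const x y)
  have h2 : HasDerivAt (fun t => w t y) _ x :=
    (((hw.differentiable one_ne_zero) (x, y)).hasFDerivAt.comp_hasDerivAt x h :
      HasDerivAt ((fun p : ℝ × ℝ => w p.1 p.2) ∘ fun t => (t, y)) _ x)
  simp only [pd1]; rw [h2.deriv]; exact h2

lemma hasDerivAt_slice2 {w : ℝ → ℝ → ℝ} (hw : ContDiff ℝ 1 (fun p : ℝ × ℝ => w p.1 p.2))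
    (x y : ℝ) : HasDerivAt (fun t => w x t) (pd2 w x y) y := by
  have h : HasDerivAt (fun t : ℝ => (x, t)) ((0:ℝ), (1:ℝ)) y := by
    simpa using (hasDerivAt_const y x).prodMk (hasDerivAt_id y)
  have h2 : HasDerivAt (fun t => w x t) _ y :=
    (((hw.differentiable one_ne_zero) (x, y)).hasFDerivAt.comp_hasDerivAt y h :
      HasDerivAt ((fun p : ℝ × ℝ => w p.1 p.2) ∘ fun t => (x, t)) _ y)
  simp only [pd2]; rw [h2.deriv]; exact h2

lemma continuous_pd1 {w : ℝ → ℝ → ℝ} (hw : ContDiff ℝ 1 (fun p : ℝ × ℝ => w p.1 p.2)) :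
    Continuous (fun p : ℝ × ℝ => pd1 w p.1 p.2) := by
  have h : ∀ p : ℝ × ℝ, pd1 w p.1 p.2 = fderiv ℝ (fun p : ℝ × ℝ => w p.1 p.2) p ((1:ℝ),(0:ℝ)) := by
    intro p
    have hd : HasDerivAt (fun t : ℝ => (t, p.2)) ((1:ℝ), (0:ℝ)) p.1 := by
      simpa using (hasDerivAt_id p.1).prodMk (hasDerivAt_const p.1 p.2)
    have h2 : HasDerivAt (fun t => w t p.2) _ p.1 :=
      (((hw.differentiable one_ne_zero) p).hasFDerivAt.comp_hasDerivAt p.1 hd :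
        HasDerivAt ((fun p : ℝ × ℝ => w p.1 p.2) ∘ fun t => (t, p.2)) _ p.1)
    simpa [pd1] using h2.deriv
  simp_rw [h]
  exact (hw.continuous_fderiv one_ne_zero).clm_apply continuous_const

lemma continuous_pd2 {w : ℝ → ℝ → ℝ} (hw : ContDiff ℝ 1 (fun p : ℝ × ℝ => w p.1 p.2)) :
    Continuous (fun p : ℝ × ℝ => pd2 w p.1 p.2) := by
  have h : ∀ p : ℝ × ℝ, pd2 w p.1 p.2 = fderiv ℝ (fun p : ℝ × ℝ => w p.1 p.2) p ((0:ℝ),(1:ℝ)) := by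
    intro p
    have hd : HasDerivAt (fun t : ℝ => (p.1, t)) ((0:ℝ), (1:ℝ)) p.2 := by
      simpa using (hasDerivAt_const p.2 p.1).prodMk (hasDerivAt_id p.2)
    have h2 : HasDerivAt (fun t => w p.1 t) _ p.2 :=
      (((hw.differentiable one_ne_zero) p).hasFDerivAt.comp_hasDerivAt p.2 hd :
        HasDerivAt ((fun p : ℝ × ℝ => w p.1 p.2) ∘ fun t => (p.1, t)) _ p.2)
    simpa [pd2] using h2.deriv
  simp_rw [h]
  exact (hw.continuous_fderiv one_ne_zero).clm_apply continuous_const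

/-- helper finsupp -/
def ee (i j : ℕ) : Fin 2 →₀ ℕ := Finsupp.single 0 i + Finsupp.single 1 j

lemma ee_apply0 (i j : ℕ) : ee i j 0 = i := by simp [ee, Finsupp.single_apply]
lemma ee_apply1 (i j : ℕ) : ee i j 1 = j := by simp [ee, Finsupp.single_apply]

lemma isQk_of_qrep {k : ℕ} {v : ℝ → ℝ → ℝ} (h : QRep k v) : IsQk k v := by
  classical
  obtain ⟨c, hc⟩ := h
  refine ⟨∑ i ∈ Finset.range (k+1), ∑ j ∈ Finset.range (k+1),
      MvPolynomial.monomial (ee i j) (c i j), ?_, ?_⟩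
  · intro n
    refine le_trans (MvPolynomial.degreeOf_sum_le _ _ _) (Finset.sup_le fun i hi => ?_)
    refine le_trans (MvPolynomial.degreeOf_sum_le _ _ _) (Finset.sup_le fun j hj => ?_)
    rcases eq_or_ne (c i j) 0 with h0 | h0
    · simp [h0]
    · rw [MvPolynomial.degreeOf_monomial_eq _ _ h0]
      have hall : ∀ n : Fin 2, ee i j n ≤ k := by
        rw [Fin.forall_fin_two, ee_apply0, ee_apply1]
        exact ⟨Nat.lt_succ_iff.mp (Finset.mem_range.mp hi),
          Nat.lt_succ_iff.mp (Finset.mem_range.mp hj)⟩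
      exact hall n
  · intro x y
    rw [hc x y, map_sum]
    refine Finset.sum_congr rfl fun i _ => ?_
    rw [map_sum]
    refine Finset.sum_congr rfl fun j _ => ?_
    rw [MvPolynomial.eval_monomial]
    rw [ee, Finsupp.prod_add_index (by intro a _; simp) (by intro a _ b1 b2; rw [pow_add])]
    rw [Finsupp.prod_single_index (by simp), Finsupp.prod_single_index (by simp)]
    simp [mul_assoc]

lemma qrep_of_isQk {k : ℕ} {v : ℝ → ℝ → ℝ} (h : IsQk k v) : QRep k v := by
  classical
  obtain ⟨p, hdeg, hev⟩ := h
  refine ⟨fun i j => MvPolynomial.coeff (ee i j) p, fun x y => ?_⟩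
  rw [hev x y, MvPolynomial.eval_eq']
  have hsub : p.support ⊆ (Finset.range (k+1) ×ˢ Finset.range (k+1)).image
      (fun ij : ℕ × ℕ => ee ij.1 ij.2) := by
    intro d hd
    refine Finset.mem_image.mpr ⟨(d 0, d 1), ?_, ?_⟩
    · refine Finset.mem_product.mpr ⟨Finset.mem_range.mpr (Nat.lt_succ_of_le ?_),
        Finset.mem_range.mpr (Nat.lt_succ_of_le ?_)⟩
      · exact le_trans (MvPolynomial.degreeOf_le_iff.mp (hdeg 0) d hd) le_rfl
      · exact le_trans (MvPolynomial.degreeOf_le_iff.mp (hdeg 1) d hd) le_rfl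
    · have hall : ∀ n : Fin 2, ee (d 0) (d 1) n = d n := by
        rw [Fin.forall_fin_two, ee_apply0, ee_apply1]; exact ⟨rfl, rfl⟩
      exact Finsupp.ext hall
  rw [Finset.sum_subset hsub (by
    intro d _ hd
    rw [MvPolynomial.notMem_support_iff.mp hd, zero_mul])]
  rw [Finset.sum_image (by
    intro a _ b _ hab
    have h0 := congrArg (fun f => f 0) hab
    have h1 := congrArg (fun f => f 1) hab
    simp only [ee_apply0, ee_apply1] at h0 h1
    exact Prod.ext h0 h1)]
  rw [Finset.sum_product]
  refine Finset.sum_congr rfl fun i _ => Finset.sum_congr rfl fun j _ => ?_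
  rw [Fin.prod_univ_two, ee_apply0, ee_apply1]
  simp [mul_assoc]

lemma hasDerivAt_poly_sum (k : ℕ) (a : ℕ → ℝ) (x : ℝ) :
    HasDerivAt (fun t => ∑ i ∈ Finset.range (k+1), a i * t ^ i)
      (∑ i ∈ Finset.range (k+1), a i * (i * x ^ (i-1))) x := by
  apply HasDerivAt.fun_sum
  intro i _
  simpa using (hasDerivAt_pow i x).const_mul (a i)

lemma shift_sum (k : ℕ) (a : ℕ → ℝ) (x : ℝ) :
    ∑ i ∈ Finset.range (k+1), a i * ((i : ℝ) * x ^ (i-1))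
      = ∑ i ∈ Finset.range (k+1), (if i + 1 ≤ k then ((i:ℝ)+1) * a (i+1) else 0) * x ^ i := by
  rw [Finset.sum_range_succ' (fun i => a i * ((i:ℝ) * x ^ (i-1))) k, Finset.sum_range_succ]
  rw [if_neg (by omega), zero_mul, add_zero]
  simp only [Nat.cast_zero, zero_mul, mul_zero, add_zero]
  refine Finset.sum_congr rfl fun i hi => ?_
  rw [if_pos (by have := Finset.mem_range.mp hi; omega)]
  simp only [Nat.add_sub_cancel]
  push_cast
  ring

lemma qrep_add {k : ℕ} {v w : ℝ → ℝ → ℝ} (hv : QRep k v) (hw : QRep k w) :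
    QRep k (fun x y => v x y + w x y) := by
  obtain ⟨c, hc⟩ := hv; obtain ⟨d, hd⟩ := hw
  refine ⟨fun i j => c i j + d i j, fun x y => ?_⟩
  dsimp only
  rw [hc, hd, ← Finset.sum_add_distrib]
  refine Finset.sum_congr rfl fun i _ => ?_
  rw [← Finset.sum_add_distrib]
  exact Finset.sum_congr rfl fun j _ => by ring

lemma qrep_swap {k : ℕ} {v : ℝ → ℝ → ℝ} (hv : QRep k v) : QRep k (fun x y => v y x) := by
  obtain ⟨c, hc⟩ := hv
  refine ⟨fun i j => c j i, fun x y => ?_⟩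
  dsimp only
  rw [hc, Finset.sum_comm]
  exact Finset.sum_congr rfl fun i _ => Finset.sum_congr rfl fun j _ => by ring

lemma qrep_pd1 {k : ℕ} {v : ℝ → ℝ → ℝ} (h : QRep k v) : QRep k (pd1 v) := by
  obtain ⟨c, hc⟩ := h
  refine ⟨fun i j => if i + 1 ≤ k then ((i:ℝ)+1) * c (i+1) j else 0, fun x y => ?_⟩
  dsimp only
  have h1 : (fun t => v t y)
      = fun t => ∑ i ∈ Finset.range (k+1), (∑ j ∈ Finset.range (k+1), c i j * y ^ j) * t ^ i := by
    funext t
    rw [hc]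
    refine Finset.sum_congr rfl fun i _ => ?_
    rw [Finset.sum_mul]
    exact Finset.sum_congr rfl fun j _ => by ring
  have h2 : pd1 v x y = ∑ i ∈ Finset.range (k+1),
      (∑ j ∈ Finset.range (k+1), c i j * y ^ j) * ((i:ℝ) * x ^ (i-1)) := by
    rw [pd1, h1]
    exact (hasDerivAt_poly_sum k _ x).deriv
  rw [h2, shift_sum]
  refine Finset.sum_congr rfl fun i _ => ?_
  split_ifs with hik
  · rw [Finset.mul_sum, Finset.sum_mul]
    exact Finset.sum_congr rfl fun j _ => by ring
  · rw [zero_mul]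
    exact (Finset.sum_eq_zero fun j _ => by ring).symm

lemma qrep_pd2 {k : ℕ} {v : ℝ → ℝ → ℝ} (h : QRep k v) : QRep k (pd2 v) :=
  qrep_swap (qrep_pd1 (qrep_swap h))

lemma qrep_contDiff {k : ℕ} {v : ℝ → ℝ → ℝ} (h : QRep k v) :
    ContDiff ℝ 1 (fun p : ℝ × ℝ => v p.1 p.2) := by
  obtain ⟨c, hc⟩ := h
  have h1 : (fun p : ℝ × ℝ => v p.1 p.2) = fun p : ℝ × ℝ =>
      ∑ i ∈ Finset.range (k+1), ∑ j ∈ Finset.range (k+1), c i j * p.1 ^ i * p.2 ^ j :=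
    funext fun p => hc p.1 p.2
  rw [h1]
  exact ContDiff.sum fun i _ => ContDiff.sum fun j _ =>
    (contDiff_const.mul (contDiff_fst.pow i)).mul (contDiff_snd.pow j)

lemma isPk_sum (k : ℕ) (a : ℕ → ℝ) :
    IsPk k (fun x => ∑ i ∈ Finset.range (k+1), a i * x ^ i) := by
  refine ⟨∑ i ∈ Finset.range (k+1), Polynomial.C (a i) * Polynomial.X ^ i, ?_, fun x => ?_⟩
  · refine Polynomial.natDegree_sum_le_of_forall_le _ _ fun i hi => ?_
    refine le_trans (Polynomial.natDegree_C_mul_le _ _) ?_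
    rw [Polynomial.natDegree_X_pow]
    have := Finset.mem_range.mp hi; omega
  · simp [Polynomial.eval_finset_sum]

lemma qrep_slice1 {k : ℕ} {v : ℝ → ℝ → ℝ} (h : QRep k v) (y : ℝ) :
    IsPk k (fun x => v x y) := by
  obtain ⟨c, hc⟩ := h
  have h1 : (fun x => v x y)
      = fun x => ∑ i ∈ Finset.range (k+1), (∑ j ∈ Finset.range (k+1), c i j * y ^ j) * x ^ i := by
    funext x
    rw [hc]
    refine Finset.sum_congr rfl fun i _ => ?_
    rw [Finset.sum_mul]
    exact Finset.sum_congr rfl fun j _ => by ring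
  rw [h1]; exact isPk_sum k _

lemma qrep_slice2 {k : ℕ} {v : ℝ → ℝ → ℝ} (h : QRep k v) (x : ℝ) :
    IsPk k (fun y => v x y) :=
  qrep_slice1 (qrep_swap h) x

lemma isPk_neg {k : ℕ} {f : ℝ → ℝ} (h : IsPk k f) : IsPk k (fun x => -(f x)) := by
  obtain ⟨p, hd, he⟩ := h
  exact ⟨-p, by simpa using hd, fun x => by simp [he x]⟩

lemma isPk_continuous {k : ℕ} {f : ℝ → ℝ} (h : IsPk k f) : Continuous f := by
  obtain ⟨p, _, he⟩ := h
  have : f = fun x => p.eval x := funext he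
  rw [this]
  exact p.continuous

lemma cont_slice1 {w : ℝ → ℝ → ℝ} (h : Continuous (fun p : ℝ × ℝ => w p.1 p.2)) (y : ℝ) :
    Continuous (fun x => w x y) := h.comp (continuous_id.prodMk continuous_const)

lemma cont_slice2 {w : ℝ → ℝ → ℝ} (h : Continuous (fun p : ℝ × ℝ => w p.1 p.2)) (x : ℝ) :
    Continuous (fun y => w x y) := h.comp (continuous_const.prodMk continuous_id)

lemma cont_param {y0 y1 : ℝ} {w : ℝ → ℝ → ℝ} (h : Continuous (fun p : ℝ × ℝ => w p.1 p.2)) :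
    Continuous (fun x => ∫ y in y0..y1, w x y) :=
  intervalIntegral.continuous_parametric_intervalIntegral_of_continuous' h y0 y1

lemma double_int_add {x0 x1 y0 y1 : ℝ} {f g : ℝ → ℝ → ℝ}
    (hf : Continuous (fun p : ℝ × ℝ => f p.1 p.2)) (hg : Continuous (fun p : ℝ × ℝ => g p.1 p.2)) :
    (∫ x in x0..x1, ∫ y in y0..y1, (f x y + g x y))
      = (∫ x in x0..x1, ∫ y in y0..y1, f x y) + ∫ x in x0..x1, ∫ y in y0..y1, g x y := by
  rw [← intervalIntegral.integral_add ((cont_param hf).intervalIntegrable _ _)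
    ((cont_param hg).intervalIntegrable _ _)]
  refine intervalIntegral.integral_congr fun x _ => ?_
  exact intervalIntegral.integral_add ((cont_slice2 hf x).intervalIntegrable _ _)
    ((cont_slice2 hg x).intervalIntegrable _ _)

lemma double_int_sub {x0 x1 y0 y1 : ℝ} {f g : ℝ → ℝ → ℝ}
    (hf : Continuous (fun p : ℝ × ℝ => f p.1 p.2)) (hg : Continuous (fun p : ℝ × ℝ => g p.1 p.2)) :
    (∫ x in x0..x1, ∫ y in y0..y1, (f x y - g x y))
      = (∫ x in x0..x1, ∫ y in y0..y1, f x y) - ∫ x in x0..x1, ∫ y in y0..y1, g x y := by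
  rw [← intervalIntegral.integral_sub ((cont_param hf).intervalIntegrable _ _)
    ((cont_param hg).intervalIntegrable _ _)]
  refine intervalIntegral.integral_congr fun x _ => ?_
  exact intervalIntegral.integral_sub ((cont_slice2 hf x).intervalIntegrable _ _)
    ((cont_slice2 hg x).intervalIntegrable _ _)

set_option maxHeartbeats 1000000 in
lemma deriv_under_integral {y0 y1 : ℝ} {w q : ℝ → ℝ → ℝ}
    (hw : ContDiff ℝ 1 (fun p : ℝ × ℝ => w p.1 p.2))
    (hq : ContDiff ℝ 1 (fun p : ℝ × ℝ => q p.1 p.2))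
    (hpd1w : Continuous (fun p : ℝ × ℝ => pd1 w p.1 p.2))
    (hpd1q : Continuous (fun p : ℝ × ℝ => pd1 q p.1 p.2))
    (x₀ : ℝ) :
    HasDerivAt (fun x => ∫ y in y0..y1, w x y * q x y)
      (∫ y in y0..y1, (pd1 w x₀ y * q x₀ y + w x₀ y * pd1 q x₀ y)) x₀ := by
  have cw := hw.continuous
  have cq := hq.continuous
  have cΦ' : Continuous (fun p : ℝ × ℝ =>
      pd1 w p.1 p.2 * q p.1 p.2 + w p.1 p.2 * pd1 q p.1 p.2) :=
    (hpd1w.mul cq).add (cw.mul hpd1q)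
  have hcomp : IsCompact ((Set.Icc (x₀ - 1) (x₀ + 1)) ×ˢ (Set.uIcc y0 y1)) :=
    isCompact_Icc.prod isCompact_uIcc
  obtain ⟨M, hM⟩ := hcomp.exists_bound_of_continuousOn cΦ'.continuousOn
  refine (intervalIntegral.hasDerivAt_integral_of_dominated_loc_of_deriv_le
    (F := fun x y => w x y * q x y)
    (F' := fun x y => pd1 w x y * q x y + w x y * pd1 q x y)
    (bound := fun _ => M) (s := Metric.ball x₀ 1) (Metric.ball_mem_nhds x₀ one_pos) ?_ ?_ ?_ ?_ ?_ ?_).2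
  · exact Filter.Eventually.of_forall fun x =>
      (((cont_slice2 cw x).mul (cont_slice2 cq x)).aestronglyMeasurable).restrict
  · exact ((cont_slice2 cw x₀).mul (cont_slice2 cq x₀)).intervalIntegrable _ _
  · exact ((((cont_slice2 hpd1w x₀).mul (cont_slice2 cq x₀)).add
      ((cont_slice2 cw x₀).mul (cont_slice2 hpd1q x₀))).aestronglyMeasurable).restrict
  · refine ae_of_all _ fun t ht x hx => ?_
    refine hM (x, t) ⟨?_, Set.uIoc_subset_uIcc ht⟩
    have hxm : x ∈ Set.Ioo (x₀ - 1) (x₀ + 1) := by rwa [Real.ball_eq_Ioo] at hx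
    exact Set.Ioo_subset_Icc_self hxm
  · exact intervalIntegrable_const
  · exact ae_of_all _ fun t ht x hx =>
      (hasDerivAt_slice1 hw x t).mul (hasDerivAt_slice1 hq x t)


lemma green (x0 x1 y0 y1 : ℝ) {w q1 q2 : ℝ → ℝ → ℝ}
    (hw : ContDiff ℝ 1 (fun p : ℝ × ℝ => w p.1 p.2))
    (hq1 : ContDiff ℝ 1 (fun p : ℝ × ℝ => q1 p.1 p.2))
    (hq2 : ContDiff ℝ 1 (fun p : ℝ × ℝ => q2 p.1 p.2))
    (hpq1 : Continuous (fun p : ℝ × ℝ => pd1 q1 p.1 p.2))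
    (hpq2 : Continuous (fun p : ℝ × ℝ => pd2 q2 p.1 p.2)) :
    ipT x0 x1 y0 y1 (pd1 w) q1 + ipT x0 x1 y0 y1 (pd2 w) q2
      + ipT x0 x1 y0 y1 w (fun x y => pd1 q1 x y + pd2 q2 x y)
    = ((∫ x in x0..x1, w x y0 * (-(q2 x y0))) + (∫ x in x0..x1, w x y1 * q2 x y1)
      + (∫ y in y0..y1, w x0 y * (-(q1 x0 y))) + (∫ y in y0..y1, w x1 y * q1 x1 y)) := by
  have cw := hw.continuous
  have cq1 := hq1.continuous
  have cq2 := hq2.continuous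
  have cpw1 := continuous_pd1 hw
  have cpw2 := continuous_pd2 hw
  -- split the third term
  have e0 : ipT x0 x1 y0 y1 w (fun x y => pd1 q1 x y + pd2 q2 x y)
      = ipT x0 x1 y0 y1 w (pd1 q1) + ipT x0 x1 y0 y1 w (pd2 q2) := by
    unfold ipT
    simp_rw [mul_add]
    exact double_int_add (cw.mul hpq1) (cw.mul hpq2)
  -- claim A : y-direction
  have eA : ipT x0 x1 y0 y1 (pd2 w) q2 + ipT x0 x1 y0 y1 w (pd2 q2)
      = ∫ x in x0..x1, (w x y1 * q2 x y1 - w x y0 * q2 x y0) := by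
    unfold ipT
    rw [← double_int_add (cpw2.mul cq2) (cw.mul hpq2)]
    refine intervalIntegral.integral_congr fun x _ => ?_
    exact intervalIntegral.integral_deriv_mul_eq_sub
      (fun y _ => hasDerivAt_slice2 hw x y) (fun y _ => hasDerivAt_slice2 hq2 x y)
      ((cont_slice2 cpw2 x).intervalIntegrable _ _)
      ((cont_slice2 hpq2 x).intervalIntegrable _ _)
  -- claim B : x-direction
  have eB : ipT x0 x1 y0 y1 (pd1 w) q1 + ipT x0 x1 y0 y1 w (pd1 q1)
      = ∫ y in y0..y1, (w x1 y * q1 x1 y - w x0 y * q1 x0 y) := by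
    unfold ipT
    rw [← double_int_add (cpw1.mul cq1) (cw.mul hpq1)]
    have cG : Continuous (fun x => ∫ y in y0..y1,
        (pd1 w x y * q1 x y + w x y * pd1 q1 x y)) :=
      cont_param (((cpw1.mul cq1)).add (cw.mul hpq1))
    have hFTC := intervalIntegral.integral_eq_sub_of_hasDerivAt
      (f := fun x => ∫ y in y0..y1, w x y * q1 x y)
      (f' := fun x => ∫ y in y0..y1, (pd1 w x y * q1 x y + w x y * pd1 q1 x y))
      (a := x0) (b := x1)
      (fun x _ => deriv_under_integral hw hq1 cpw1 hpq1 x)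
      (cG.intervalIntegrable _ _)
    rw [hFTC]
    rw [← intervalIntegral.integral_sub (((cont_slice2 cw x1).fun_mul (cont_slice2 cq1 x1)).intervalIntegrable _ _)
      (((cont_slice2 cw x0).fun_mul (cont_slice2 cq1 x0)).intervalIntegrable _ _)]
  -- edges
  have ed1 : (∫ x in x0..x1, (w x y1 * q2 x y1 - w x y0 * q2 x y0))
      = (∫ x in x0..x1, w x y0 * (-(q2 x y0))) + ∫ x in x0..x1, w x y1 * q2 x y1 := by
    rw [intervalIntegral.integral_sub (((cont_slice1 cw y1).fun_mul (cont_slice1 cq2 y1)).intervalIntegrable _ _)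
      (((cont_slice1 cw y0).fun_mul (cont_slice1 cq2 y0)).intervalIntegrable _ _)]
    simp_rw [mul_neg]
    rw [intervalIntegral.integral_neg]
    ring
  have ed2 : (∫ y in y0..y1, (w x1 y * q1 x1 y - w x0 y * q1 x0 y))
      = (∫ y in y0..y1, w x0 y * (-(q1 x0 y))) + ∫ y in y0..y1, w x1 y * q1 x1 y := by
    rw [intervalIntegral.integral_sub (((cont_slice2 cw x1).fun_mul (cont_slice2 cq1 x1)).intervalIntegrable _ _)
      (((cont_slice2 cw x0).fun_mul (cont_slice2 cq1 x0)).intervalIntegrable _ _)]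
    simp_rw [mul_neg]
    rw [intervalIntegral.integral_neg]
    ring
  rw [e0]
  rw [ed1] at eA
  rw [ed2] at eB
  linarith


lemma projT_transfer {k : ℕ} {x0 x1 y0 y1 : ℝ} {φ P : ℝ → ℝ → ℝ}
    (h : IsProjT k x0 x1 y0 y1 φ P) (hφ : Continuous (fun p : ℝ × ℝ => φ p.1 p.2))
    {q : ℝ → ℝ → ℝ} (hq : QRep k q) :
    ipT x0 x1 y0 y1 φ q = ipT x0 x1 y0 y1 P q := by
  have h0 := h.2 q (isQk_of_qrep hq)
  have cP := (qrep_contDiff (qrep_of_isQk h.1)).continuous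
  have cq := (qrep_contDiff hq).continuous
  have hsub : ipT x0 x1 y0 y1 (fun x y => φ x y - P x y) q
      = ipT x0 x1 y0 y1 φ q - ipT x0 x1 y0 y1 P q := by
    unfold ipT
    simp_rw [sub_mul]
    exact double_int_sub (hφ.mul cq) (cP.mul cq)
  rw [hsub] at h0
  linarith

lemma projE_transfer {k : ℕ} {a b : ℝ} {f g : ℝ → ℝ} (h : IsProjE k a b f g)
    (hf : Continuous f) {q : ℝ → ℝ} (hq : IsPk k q) :
    (∫ x in a..b, f x * q x) = ∫ x in a..b, g x * q x := by
  have h0 := h.2 q hq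
  have cg := isPk_continuous h.1
  have cq := isPk_continuous hq
  have hsub : (∫ x in a..b, (f x - g x) * q x)
      = (∫ x in a..b, f x * q x) - ∫ x in a..b, g x * q x := by
    simp_rw [sub_mul]
    exact intervalIntegral.integral_sub ((hf.mul cq).intervalIntegrable _ _)
      ((cg.mul cq).intervalIntegrable _ _)
  rw [hsub] at h0
  linarith

lemma ipT_comm (x0 x1 y0 y1 : ℝ) (f g : ℝ → ℝ → ℝ) :
    ipT x0 x1 y0 y1 f g = ipT x0 x1 y0 y1 g f := by
  unfold ipT
  exact intervalIntegral.integral_congr fun x _ =>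
    intervalIntegral.integral_congr fun y _ => mul_comm _ _

end Statement19Aux

/-- `(∇_w(Q_N u), ∇_w v)_T = (∇u, ∇v₀)_T − ⟨v₀ − v_b, (𝐐_N∇u)·𝐧⟩_{∂T}`
on the rectangle `T = [x0,x1] × [y0,y1]`. `(G1,G2)` is the discrete weak gradient of
`Q_N u = (Q₀u, Q_b u, 𝐐_g(∇u))`, `(Gv1,Gv2)` that of the triple `v = (v₀, v_b, 𝐯_g)`,
and `(P1,P2) = 𝐐_N(∇u)`, all characterized by their defining identities. -/
theorem statement19 (k : ℕ) (hk : 3 ≤ k) (x0 x1 y0 y1 : ℝ) (hx : x0 < x1) (hy : y0 < y1)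
    (u : ℝ → ℝ → ℝ) (hu : ContDiff ℝ 1 (fun p : ℝ × ℝ => u p.1 p.2))
    -- the projections defining Q_N u and 𝐐_N(∇u)
    (P0u P1 P2 : ℝ → ℝ → ℝ)
    (hP0u : IsProjT k x0 x1 y0 y1 u P0u)
    (hP1 : IsProjT k x0 x1 y0 y1 (pd1 u) P1)
    (hP2 : IsProjT k x0 x1 y0 y1 (pd2 u) P2)
    (qbB qbT qbL qbR : ℝ → ℝ)
    (hqbB : IsProjE k x0 x1 (fun x => u x y0) qbB)
    (hqbT : IsProjE k x0 x1 (fun x => u x y1) qbT)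
    (hqbL : IsProjE k y0 y1 (fun y => u x0 y) qbL)
    (hqbR : IsProjE k y0 y1 (fun y => u x1 y) qbR)
    -- the triple v = (v₀, v_b, 𝐯_g), with L² data on each edge
    (v0 : ℝ → ℝ → ℝ) (hv0 : IsQk k v0)
    (vbB vbT vbL vbR vg1B vg2B vg1T vg2T vg1L vg2L vg1R vg2R : ℝ → ℝ)
    (hvbB : L2Edge x0 x1 vbB) (hvbT : L2Edge x0 x1 vbT)
    (hvbL : L2Edge y0 y1 vbL) (hvbR : L2Edge y0 y1 vbR)
    (hvg1B : L2Edge x0 x1 vg1B) (hvg2B : L2Edge x0 x1 vg2B)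
    (hvg1T : L2Edge x0 x1 vg1T) (hvg2T : L2Edge x0 x1 vg2T)
    (hvg1L : L2Edge y0 y1 vg1L) (hvg2L : L2Edge y0 y1 vg2L)
    (hvg1R : L2Edge y0 y1 vg1R) (hvg2R : L2Edge y0 y1 vg2R)
    -- the discrete weak gradient of Q_N u
    (G1 G2 : ℝ → ℝ → ℝ) (hG1k : IsQk k G1) (hG2k : IsQk k G2)
    (hG : ∀ q1 q2 : ℝ → ℝ → ℝ, IsQk k q1 → IsQk k q2 →
      ipT x0 x1 y0 y1 G1 q1 + ipT x0 x1 y0 y1 G2 q2 =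
        -(ipT x0 x1 y0 y1 P0u (fun x y => pd1 q1 x y + pd2 q2 x y))
          + ((∫ x in x0..x1, qbB x * (-(q2 x y0)))
            + (∫ x in x0..x1, qbT x * q2 x y1)
            + (∫ y in y0..y1, qbL y * (-(q1 x0 y)))
            + (∫ y in y0..y1, qbR y * q1 x1 y)))
    -- the discrete weak gradient of v
    (Gv1 Gv2 : ℝ → ℝ → ℝ) (hGv1k : IsQk k Gv1) (hGv2k : IsQk k Gv2)
    (hGv : ∀ q1 q2 : ℝ → ℝ → ℝ, IsQk k q1 → IsQk k q2 →
      ipT x0 x1 y0 y1 Gv1 q1 + ipT x0 x1 y0 y1 Gv2 q2 =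
        -(ipT x0 x1 y0 y1 v0 (fun x y => pd1 q1 x y + pd2 q2 x y))
          + ((∫ x in x0..x1, vbB x * (-(q2 x y0)))
            + (∫ x in x0..x1, vbT x * q2 x y1)
            + (∫ y in y0..y1, vbL y * (-(q1 x0 y)))
            + (∫ y in y0..y1, vbR y * q1 x1 y))) :
    ipT x0 x1 y0 y1 G1 Gv1 + ipT x0 x1 y0 y1 G2 Gv2 =
      ipT x0 x1 y0 y1 (pd1 u) (pd1 v0) + ipT x0 x1 y0 y1 (pd2 u) (pd2 v0)
        - ((∫ x in x0..x1, (v0 x y0 - vbB x) * (-(P2 x y0)))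
          + (∫ x in x0..x1, (v0 x y1 - vbT x) * P2 x y1)
          + (∫ y in y0..y1, (v0 x0 y - vbL y) * (-(P1 x0 y)))
          + (∫ y in y0..y1, (v0 x1 y - vbR y) * P1 x1 y)) := by
  have hqGv1 : QRep k Gv1 := qrep_of_isQk hGv1k
  have hqGv2 : QRep k Gv2 := qrep_of_isQk hGv2k
  have hqP1 : QRep k P1 := qrep_of_isQk hP1.1
  have hqP2 : QRep k P2 := qrep_of_isQk hP2.1
  have hqv0 : QRep k v0 := qrep_of_isQk hv0
  have cu := hu.continuous
  have cu1 := continuous_pd1 hu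
  have cu2 := continuous_pd2 hu
  have cv0 := (qrep_contDiff hqv0).continuous
  have cP1 := (qrep_contDiff hqP1).continuous
  have cP2 := (qrep_contDiff hqP2).continuous
  -- Step 1: key identity `(∇_w Q_N u, q) = (𝐐_N ∇u, q)` for all Q_k test pairs
  have key : ∀ q1 q2 : ℝ → ℝ → ℝ, QRep k q1 → QRep k q2 →
      ipT x0 x1 y0 y1 G1 q1 + ipT x0 x1 y0 y1 G2 q2
        = ipT x0 x1 y0 y1 P1 q1 + ipT x0 x1 y0 y1 P2 q2 := by
    intro q1 q2 hq1 hq2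
    rw [hG q1 q2 (isQk_of_qrep hq1) (isQk_of_qrep hq2)]
    have hD : QRep k (fun x y => pd1 q1 x y + pd2 q2 x y) :=
      qrep_add (qrep_pd1 hq1) (qrep_pd2 hq2)
    have e1 : ipT x0 x1 y0 y1 P0u (fun x y => pd1 q1 x y + pd2 q2 x y)
        = ipT x0 x1 y0 y1 u (fun x y => pd1 q1 x y + pd2 q2 x y) :=
      (projT_transfer hP0u cu hD).symm
    have e2 : (∫ x in x0..x1, qbB x * (-(q2 x y0)))
        = ∫ x in x0..x1, u x y0 * (-(q2 x y0)) :=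
      (projE_transfer hqbB (cont_slice1 cu y0) (isPk_neg (qrep_slice1 hq2 y0))).symm
    have e3 : (∫ x in x0..x1, qbT x * q2 x y1)
        = ∫ x in x0..x1, u x y1 * q2 x y1 :=
      (projE_transfer hqbT (cont_slice1 cu y1) (qrep_slice1 hq2 y1)).symm
    have e4 : (∫ y in y0..y1, qbL y * (-(q1 x0 y)))
        = ∫ y in y0..y1, u x0 y * (-(q1 x0 y)) :=
      (projE_transfer hqbL (cont_slice2 cu x0) (isPk_neg (qrep_slice2 hq1 x0))).symm
    have e5 : (∫ y in y0..y1, qbR y * q1 x1 y)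
        = ∫ y in y0..y1, u x1 y * q1 x1 y :=
      (projE_transfer hqbR (cont_slice2 cu x1) (qrep_slice2 hq1 x1)).symm
    have eg := green x0 x1 y0 y1 hu (qrep_contDiff hq1) (qrep_contDiff hq2)
      (continuous_pd1 (qrep_contDiff hq1)) (continuous_pd2 (qrep_contDiff hq2))
    have e6 : ipT x0 x1 y0 y1 (pd1 u) q1 = ipT x0 x1 y0 y1 P1 q1 :=
      projT_transfer hP1 cu1 hq1
    have e7 : ipT x0 x1 y0 y1 (pd2 u) q2 = ipT x0 x1 y0 y1 P2 q2 :=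
      projT_transfer hP2 cu2 hq2
    rw [e1, e2, e3, e4, e5]
    linarith
  have step1 := key Gv1 Gv2 hqGv1 hqGv2
  have c1 : ipT x0 x1 y0 y1 P1 Gv1 = ipT x0 x1 y0 y1 Gv1 P1 := ipT_comm _ _ _ _ _ _
  have c2 : ipT x0 x1 y0 y1 P2 Gv2 = ipT x0 x1 y0 y1 Gv2 P2 := ipT_comm _ _ _ _ _ _
  have step3 := hGv P1 P2 hP1.1 hP2.1
  have egv := green x0 x1 y0 y1 (qrep_contDiff hqv0) (qrep_contDiff hqP1)
    (qrep_contDiff hqP2) (continuous_pd1 (qrep_contDiff hqP1))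
    (continuous_pd2 (qrep_contDiff hqP2))
  have s51 : ipT x0 x1 y0 y1 (pd1 u) (pd1 v0) = ipT x0 x1 y0 y1 P1 (pd1 v0) :=
    projT_transfer hP1 cu1 (qrep_pd1 hqv0)
  have s52 : ipT x0 x1 y0 y1 (pd2 u) (pd2 v0) = ipT x0 x1 y0 y1 P2 (pd2 v0) :=
    projT_transfer hP2 cu2 (qrep_pd2 hqv0)
  have c3 : ipT x0 x1 y0 y1 P1 (pd1 v0) = ipT x0 x1 y0 y1 (pd1 v0) P1 := ipT_comm _ _ _ _ _ _
  have c4 : ipT x0 x1 y0 y1 P2 (pd2 v0) = ipT x0 x1 y0 y1 (pd2 v0) P2 := ipT_comm _ _ _ _ _ _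
  -- boundary splitting
  have b1 : (∫ x in x0..x1, (v0 x y0 - vbB x) * (-(P2 x y0)))
      = (∫ x in x0..x1, v0 x y0 * (-(P2 x y0))) - ∫ x in x0..x1, vbB x * (-(P2 x y0)) := by
    rw [← intervalIntegral.integral_sub
      (((cont_slice1 cv0 y0).fun_mul (cont_slice1 cP2 y0).fun_neg).intervalIntegrable _ _)
      (hvbB.1.mul_continuousOn (cont_slice1 cP2 y0).fun_neg.continuousOn)]
    exact intervalIntegral.integral_congr fun x _ => by ring
  have b2 : (∫ x in x0..x1, (v0 x y1 - vbT x) * P2 x y1)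
      = (∫ x in x0..x1, v0 x y1 * P2 x y1) - ∫ x in x0..x1, vbT x * P2 x y1 := by
    rw [← intervalIntegral.integral_sub
      (((cont_slice1 cv0 y1).fun_mul (cont_slice1 cP2 y1)).intervalIntegrable _ _)
      (hvbT.1.mul_continuousOn (cont_slice1 cP2 y1).continuousOn)]
    exact intervalIntegral.integral_congr fun x _ => by ring
  have b3 : (∫ y in y0..y1, (v0 x0 y - vbL y) * (-(P1 x0 y)))
      = (∫ y in y0..y1, v0 x0 y * (-(P1 x0 y))) - ∫ y in y0..y1, vbL y * (-(P1 x0 y)) := by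
    rw [← intervalIntegral.integral_sub
      (((cont_slice2 cv0 x0).fun_mul (cont_slice2 cP1 x0).fun_neg).intervalIntegrable _ _)
      (hvbL.1.mul_continuousOn (cont_slice2 cP1 x0).fun_neg.continuousOn)]
    exact intervalIntegral.integral_congr fun y _ => by ring
  have b4 : (∫ y in y0..y1, (v0 x1 y - vbR y) * P1 x1 y)
      = (∫ y in y0..y1, v0 x1 y * P1 x1 y) - ∫ y in y0..y1, vbR y * P1 x1 y := by
    rw [← intervalIntegral.integral_sub
      (((cont_slice2 cv0 x1).fun_mul (cont_slice2 cP1 x1)).intervalIntegrable _ _)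
      (hvbR.1.mul_continuousOn (cont_slice2 cP1 x1).continuousOn)]
    exact intervalIntegral.integral_congr fun y _ => by ring
  rw [b1, b2, b3, b4]
  linarith
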